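/- Let n ≥ 1, σ_w > 0, σ > 0. Let w₁,…,w_n be i.i.d. N(0,σ_w²), x₁,…,x_n be i.i.d. N(0,1), and Δ₁,…,Δ_n be i.i.d. N(0,σ²), with the three families mutually independent. Set γ_i = sign(x_i + Δ_i) − sign(x_i). Then Var(∑_{i=1}^n sign(w_i)·γ_i) = n·(4/π)·arctan(σ). -/

import Mathlib

open MeasureTheory ProbabilityTheory Real Set Filter
open scoped NNReal ENNReal

/-! ### Auxiliary lemmas -/

lemma measurable_realSign : Measurable Real.sign := by
  have : Real.sign = fun r : ℝ => if r < 0 then (-1:ℝ) else if 0 < r then 1 else 0 := by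
    funext r; rfl
  rw [this]
  exact Measurable.ite (measurableSet_lt measurable_id measurable_const) measurable_const
    (Measurable.ite (measurableSet_lt measurable_const measurable_id) measurable_const
      measurable_const)

lemma sign_mul_pos {r : ℝ} (hr : 0 < r) (a : ℝ) : Real.sign (r * a) = Real.sign a := by
  rcases lt_trichotomy a 0 with h | h | h
  · rw [Real.sign_of_neg h, Real.sign_of_neg (mul_neg_of_pos_of_neg hr h)]
  · simp [h]
  · rw [Real.sign_of_pos h, Real.sign_of_pos (mul_pos hr h)]

lemma gbound (a b : ℝ) : (Real.sign a - Real.sign b)^2 ≤ 4 := by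
  rcases Real.sign_apply_eq a with h|h|h <;> rcases Real.sign_apply_eq b with h'|h'|h' <;>
    rw [h, h'] <;> norm_num

lemma sign_abs_le (a : ℝ) : |Real.sign a| ≤ 1 := by
  rcases Real.sign_apply_eq a with h|h|h <;> rw [h] <;> norm_num

lemma integral_gauss_std (h : ℝ → ℝ) :
    ∫ x, h x ∂(gaussianReal 0 1) = ∫ x, gaussianPDFReal 0 1 x * h x := by
  rw [gaussianReal_of_var_ne_zero 0 one_ne_zero]
  have hd : gaussianPDF 0 1 = fun x => ((Real.toNNReal (gaussianPDFReal 0 1 x) : ℝ≥0) : ℝ≥0∞) := by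
    funext x; rw [gaussianPDF]; rfl
  rw [hd, integral_withDensity_eq_integral_smul
    ((stronglyMeasurable_gaussianPDFReal 0 1).measurable.real_toNNReal) h]
  congr 1; funext x
  rw [NNReal.smul_def, Real.coe_toNNReal _ (gaussianPDFReal_nonneg 0 1 x), smul_eq_mul]

lemma piece_integral {H : ℝ → ℝ} {a b c : ℝ} (hab : a ≤ b)
    (h : ∀ θ ∈ Ioo a b, H θ = c) :
    (∫ θ in Ioc a b, H θ) = c * (b - a) ∧ IntegrableOn H (Ioc a b) := by
  have hres : (volume : Measure ℝ).restrict (Ioc a b) = volume.restrict (Ioo a b) :=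
    Measure.restrict_congr_set Ioo_ae_eq_Ioc.symm
  have hae : H =ᵐ[volume.restrict (Ioc a b)] fun _ => c := by
    rw [hres]
    exact (ae_restrict_iff' measurableSet_Ioo).2 (Filter.Eventually.of_forall h)
  constructor
  · rw [integral_congr_ae hae, setIntegral_const, Real.volume_real_Ioc_of_le hab, smul_eq_mul,
      mul_comm]
  · exact (integrableOn_const (by rw [Real.volume_Ioc]; exact ENNReal.ofReal_ne_top))
      |>.congr hae.symm

lemma angular (σ : ℝ) (hσ : 0 < σ) :
    (∫ θ in Ioo (-π) π, (Real.sign (Real.cos θ + σ * Real.sin θ) - Real.sign (Real.cos θ))^2)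
      = 8 * Real.arctan σ := by
  set α := Real.arctan σ with hα
  have hα0 : 0 < α := by
    have := Real.arctan_strictMono hσ
    rw [Real.arctan_zero] at this; exact this
  have hα2 : α < π / 2 := Real.arctan_lt_pi_div_two σ
  have hπ : 0 < π := Real.pi_pos
  set H : ℝ → ℝ := fun θ => (Real.sign (Real.cos θ + σ * Real.sin θ) - Real.sign (Real.cos θ))^2
    with hH
  have key : ∀ θ, Real.cos θ + σ * Real.sin θ = Real.sqrt (1 + σ^2) * Real.cos (θ - α) := by
    intro θ
    have hs : Real.sqrt (1 + σ^2) ≠ 0 := by positivity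
    rw [Real.cos_sub, hα, Real.cos_arctan, Real.sin_arctan]
    field_simp
  have signkey : ∀ θ, Real.sign (Real.cos θ + σ * Real.sin θ) = Real.sign (Real.cos (θ - α)) := by
    intro θ
    rw [key θ, sign_mul_pos (by positivity)]
  have p1 : ∀ θ ∈ Ioo (-π) (-(π/2)), H θ = 0 := by
    intro θ hθ
    have hc : Real.cos θ < 0 := by
      rw [← Real.cos_neg]
      exact Real.cos_neg_of_pi_div_two_lt_of_lt (by linarith [hθ.1, hθ.2]) (by linarith [hθ.1, hθ.2])
    have hc2 : Real.cos (θ - α) < 0 := by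
      rw [← Real.cos_neg]
      exact Real.cos_neg_of_pi_div_two_lt_of_lt (by linarith [hθ.1, hθ.2]) (by linarith [hθ.1, hθ.2])
    simp only [hH]
    rw [signkey, Real.sign_of_neg hc, Real.sign_of_neg hc2]; norm_num
  have p2 : ∀ θ ∈ Ioo (-(π/2)) (α - π/2), H θ = 4 := by
    intro θ hθ
    have hc : 0 < Real.cos θ := Real.cos_pos_of_mem_Ioo ⟨hθ.1, by linarith [hθ.1, hθ.2]⟩
    have hc2 : Real.cos (θ - α) < 0 := by
      rw [← Real.cos_neg]
      exact Real.cos_neg_of_pi_div_two_lt_of_lt (by linarith [hθ.1, hθ.2]) (by linarith [hθ.1, hθ.2])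
    simp only [hH]
    rw [signkey, Real.sign_of_pos hc, Real.sign_of_neg hc2]; norm_num
  have p3 : ∀ θ ∈ Ioo (α - π/2) (π/2), H θ = 0 := by
    intro θ hθ
    have hc : 0 < Real.cos θ := Real.cos_pos_of_mem_Ioo ⟨by linarith [hθ.1, hθ.2], hθ.2⟩
    have hc2 : 0 < Real.cos (θ - α) :=
      Real.cos_pos_of_mem_Ioo ⟨by linarith [hθ.1, hθ.2], by linarith [hθ.1, hθ.2]⟩
    simp only [hH]
    rw [signkey, Real.sign_of_pos hc, Real.sign_of_pos hc2]; norm_num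
  have p4 : ∀ θ ∈ Ioo (π/2) (α + π/2), H θ = 4 := by
    intro θ hθ
    have hc : Real.cos θ < 0 :=
      Real.cos_neg_of_pi_div_two_lt_of_lt hθ.1 (by linarith [hθ.1, hθ.2])
    have hc2 : 0 < Real.cos (θ - α) :=
      Real.cos_pos_of_mem_Ioo ⟨by linarith [hθ.1, hθ.2], by linarith [hθ.1, hθ.2]⟩
    simp only [hH]
    rw [signkey, Real.sign_of_pos hc2, Real.sign_of_neg hc]; norm_num
  have p5 : ∀ θ ∈ Ioo (α + π/2) π, H θ = 0 := by
    intro θ hθ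
    have hc : Real.cos θ < 0 :=
      Real.cos_neg_of_pi_div_two_lt_of_lt (by linarith [hθ.1, hθ.2]) (by linarith [hθ.1, hθ.2])
    have hc2 : Real.cos (θ - α) < 0 :=
      Real.cos_neg_of_pi_div_two_lt_of_lt (by linarith [hθ.1, hθ.2]) (by linarith [hθ.1, hθ.2])
    simp only [hH]
    rw [signkey, Real.sign_of_neg hc, Real.sign_of_neg hc2]; norm_num
  obtain ⟨i1, I1⟩ := piece_integral (by linarith : -π ≤ -(π/2)) p1
  obtain ⟨i2, I2⟩ := piece_integral (by linarith : -(π/2) ≤ α - π/2) p2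
  obtain ⟨i3, I3⟩ := piece_integral (by linarith : α - π/2 ≤ π/2) p3
  obtain ⟨i4, I4⟩ := piece_integral (by linarith : π/2 ≤ α + π/2) p4
  obtain ⟨i5, I5⟩ := piece_integral (by linarith : α + π/2 ≤ π) p5
  have hset : (∫ θ in Ioo (-π) π, H θ) = ∫ θ in Ioc (-π) π, H θ :=
    setIntegral_congr_set Ioo_ae_eq_Ioc
  have I45 : IntegrableOn H (Ioc (π/2) π) := by
    rw [← Ioc_union_Ioc_eq_Ioc (by linarith : π/2 ≤ α + π/2) (by linarith : α + π/2 ≤ π)]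
    exact I4.union I5
  have I35 : IntegrableOn H (Ioc (α - π/2) π) := by
    rw [← Ioc_union_Ioc_eq_Ioc (by linarith : α - π/2 ≤ π/2) (by linarith : π/2 ≤ π)]
    exact I3.union I45
  have I25 : IntegrableOn H (Ioc (-(π/2)) π) := by
    rw [← Ioc_union_Ioc_eq_Ioc (by linarith : -(π/2) ≤ α - π/2) (by linarith : α - π/2 ≤ π)]
    exact I2.union I35
  have u45 : (∫ θ in Ioc (π/2) π, H θ)
      = (∫ θ in Ioc (π/2) (α + π/2), H θ) + ∫ θ in Ioc (α + π/2) π, H θ := by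
    rw [← Ioc_union_Ioc_eq_Ioc (by linarith : π/2 ≤ α + π/2) (by linarith : α + π/2 ≤ π),
      setIntegral_union (Ioc_disjoint_Ioc_of_le le_rfl) measurableSet_Ioc I4 I5]
  have u35 : (∫ θ in Ioc (α - π/2) π, H θ)
      = (∫ θ in Ioc (α - π/2) (π/2), H θ) + ∫ θ in Ioc (π/2) π, H θ := by
    rw [← Ioc_union_Ioc_eq_Ioc (by linarith : α - π/2 ≤ π/2) (by linarith : π/2 ≤ π),
      setIntegral_union (Ioc_disjoint_Ioc_of_le le_rfl) measurableSet_Ioc I3 I45]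
  have u25 : (∫ θ in Ioc (-(π/2)) π, H θ)
      = (∫ θ in Ioc (-(π/2)) (α - π/2), H θ) + ∫ θ in Ioc (α - π/2) π, H θ := by
    rw [← Ioc_union_Ioc_eq_Ioc (by linarith : -(π/2) ≤ α - π/2) (by linarith : α - π/2 ≤ π),
      setIntegral_union (Ioc_disjoint_Ioc_of_le le_rfl) measurableSet_Ioc I2 I35]
  have u15 : (∫ θ in Ioc (-π) π, H θ)
      = (∫ θ in Ioc (-π) (-(π/2)), H θ) + ∫ θ in Ioc (-(π/2)) π, H θ := by
    rw [← Ioc_union_Ioc_eq_Ioc (by linarith : -π ≤ -(π/2)) (by linarith : -(π/2) ≤ π),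
      setIntegral_union (Ioc_disjoint_Ioc_of_le le_rfl) measurableSet_Ioc I1 I25]
  rw [hset, u15, u25, u35, u45, i1, i2, i3, i4, i5]
  ring

lemma radial : (∫ r in Ioi (0:ℝ), r * Real.exp (-(r^2) / 2)) = 1 := by
  have hderiv : ∀ r ∈ Ioi (0:ℝ),
      HasDerivAt (fun t : ℝ => -Real.exp (-(t^2) / 2)) (r * Real.exp (-(r^2) / 2)) r := by
    intro r _
    have h1 : HasDerivAt (fun t : ℝ => -(t^2) / 2) (-r) r := by
      have := ((hasDerivAt_pow 2 r).neg).div_const 2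
      simpa using this.congr_deriv (by ring)
    have := (h1.exp).neg
    exact this.congr_deriv (by ring)
  have hint : IntegrableOn (fun r : ℝ => r * Real.exp (-(r^2) / 2)) (Ioi 0) := by
    have : Integrable (fun r : ℝ => r * Real.exp (-(1/2) * r^2)) :=
      integrable_mul_exp_neg_mul_sq (by norm_num)
    exact (this.congr (Filter.EventuallyEq.of_eq (by funext r; ring_nf))).integrableOn
  have htend : Tendsto (fun t : ℝ => -Real.exp (-(t^2) / 2)) atTop (nhds 0) := by
    rw [show (0:ℝ) = -0 by ring]
    apply Tendsto.neg
    apply Real.tendsto_exp_atBot.comp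
    apply Filter.Tendsto.atBot_div_const (by norm_num)
    exact tendsto_neg_atTop_atBot.comp (tendsto_pow_atTop (by norm_num))
  have hcont : ContinuousWithinAt (fun t : ℝ => -Real.exp (-(t^2) / 2)) (Ici 0) 0 := by
    apply Continuous.continuousWithinAt; fun_prop
  have := integral_Ioi_of_hasDerivAt_of_tendsto hcont hderiv hint htend
  simpa using this

lemma measurable_g (σ : ℝ) : Measurable (fun p : ℝ × ℝ =>
    (Real.sign (p.1 + σ * p.2) - Real.sign p.1)^2) := by
  exact (((measurable_realSign.comp (measurable_fst.add (measurable_const.mul measurable_snd))).sub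
    (measurable_realSign.comp measurable_fst)).pow_const 2)

lemma core (σ : ℝ) (hσ : 0 < σ) :
    (∫ p : ℝ × ℝ, (Real.sign (p.1 + σ * p.2) - Real.sign p.1)^2
      ∂((gaussianReal 0 1).prod (gaussianReal 0 1))) = 4 / π * Real.arctan σ := by
  set g : ℝ × ℝ → ℝ := fun p => (Real.sign (p.1 + σ * p.2) - Real.sign p.1)^2 with hg
  set φ : ℝ → ℝ := gaussianPDFReal 0 1 with hφ
  have hπ : 0 < π := Real.pi_pos
  have hgm : Measurable g := measurable_g σ
  have hgb : ∀ p, ‖g p‖ ≤ 4 := by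
    intro p
    rw [Real.norm_eq_abs, abs_of_nonneg (sq_nonneg _)]
    exact gbound _ _
  have hgnn : ∀ p, 0 ≤ g p := fun p => sq_nonneg _
  have hint : Integrable g ((gaussianReal 0 1).prod (gaussianReal 0 1)) := by
    refine Integrable.mono' (integrable_const 4) hgm.aestronglyMeasurable ?_
    exact Filter.Eventually.of_forall hgb
  rw [integral_prod _ hint]
  have step1 : (∫ x, ∫ y, g (x, y) ∂(gaussianReal 0 1) ∂(gaussianReal 0 1))
      = ∫ x, ∫ y, φ x * (φ y * g (x, y)) := by
    rw [integral_gauss_std]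
    congr 1; funext x
    rw [integral_gauss_std, ← integral_const_mul]
  rw [step1]
  have hφint : Integrable φ := integrable_gaussianPDFReal 0 1
  have hφm : Measurable φ := measurable_gaussianPDFReal 0 1
  have hφnn : ∀ t, 0 ≤ φ t := gaussianPDFReal_nonneg 0 1
  have hFint : Integrable (Function.uncurry fun x y => φ x * (φ y * g (x, y)))
      ((volume : Measure ℝ).prod volume) := by
    have hbase : Integrable (fun p : ℝ × ℝ => φ p.1 * φ p.2)
        ((volume : Measure ℝ).prod volume) := hφint.mul_prod hφint
    refine Integrable.mono' (hbase.const_mul 4) ?_ ?_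
    · exact ((hφm.comp measurable_fst).mul ((hφm.comp measurable_snd).mul
        (hgm.comp measurable_id))).aestronglyMeasurable
    · refine Filter.Eventually.of_forall fun p => ?_
      obtain ⟨a, b⟩ := p
      simp only [Function.uncurry_apply_pair]
      rw [Real.norm_eq_abs, abs_of_nonneg (mul_nonneg (hφnn _) (mul_nonneg (hφnn _) (hgnn _)))]
      have := hgb (a, b)
      rw [Real.norm_eq_abs, abs_of_nonneg (hgnn (a, b))] at this
      have h1 : φ a * (φ b * g (a, b)) ≤ φ a * (φ b * 4) := by
        apply mul_le_mul_of_nonneg_left _ (hφnn _)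
        exact mul_le_mul_of_nonneg_left this (hφnn _)
      calc φ a * (φ b * g (a, b)) ≤ φ a * (φ b * 4) := h1
        _ = 4 * (φ a * φ b) := by ring
  rw [integral_integral hFint]
  have hvol : ((volume : Measure ℝ).prod volume) = (volume : Measure (ℝ × ℝ)) :=
    (Measure.volume_eq_prod ℝ ℝ).symm
  rw [hvol]
  rw [← integral_comp_polarCoord_symm (fun p : ℝ × ℝ => φ p.1 * (φ p.2 * g (p.1, p.2)))]
  have htarget : polarCoord.target = Ioi (0:ℝ) ×ˢ Ioo (-π) π := rfl
  have hpt : ∀ p ∈ polarCoord.target,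
      p.1 • (φ (polarCoord.symm p).1 * (φ (polarCoord.symm p).2 *
          g ((polarCoord.symm p).1, (polarCoord.symm p).2)))
        = (fun r => r * Real.exp (-(r^2)/2)) p.1 *
          (fun θ => (2*π)⁻¹ * (Real.sign (Real.cos θ + σ * Real.sin θ) - Real.sign (Real.cos θ))^2) p.2 := by
    rintro ⟨r, θ⟩ hp
    rw [htarget] at hp
    obtain ⟨hr, hθ⟩ := hp
    have hr' : (0:ℝ) < r := hr
    have hsymm : polarCoord.symm (r, θ) = (r * Real.cos θ, r * Real.sin θ) := rfl
    rw [hsymm]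
    dsimp only
    have hφprod : φ (r * Real.cos θ) * φ (r * Real.sin θ) = (2*π)⁻¹ * Real.exp (-(r^2)/2) := by
      rw [hφ]
      simp only [gaussianPDFReal, NNReal.coe_one, mul_one, sub_zero]
      rw [show ∀ a b : ℝ, (√(2*π))⁻¹ * Real.exp a * ((√(2*π))⁻¹ * Real.exp b)
          = ((√(2*π))⁻¹ * (√(2*π))⁻¹) * Real.exp (a + b) from
        fun a b => by rw [Real.exp_add]; ring]
      congr 1
      · rw [← mul_inv, Real.mul_self_sqrt (by positivity : (0:ℝ) ≤ 2*π)]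
      · congr 1
        nlinarith [Real.sin_sq_add_cos_sq θ]
    have hgval : g (r * Real.cos θ, r * Real.sin θ)
        = (Real.sign (Real.cos θ + σ * Real.sin θ) - Real.sign (Real.cos θ))^2 := by
      rw [hg]
      dsimp only
      rw [show r * Real.cos θ + σ * (r * Real.sin θ) = r * (Real.cos θ + σ * Real.sin θ) by ring,
        sign_mul_pos hr', sign_mul_pos hr']
    rw [hgval, smul_eq_mul, show φ (r * Real.cos θ) * (φ (r * Real.sin θ) * _) =
      (φ (r * Real.cos θ) * φ (r * Real.sin θ)) *
        (Real.sign (Real.cos θ + σ * Real.sin θ) - Real.sign (Real.cos θ))^2 from by ring,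
      hφprod]
    ring
  rw [setIntegral_congr_fun (polarCoord.open_target.measurableSet) hpt]
  rw [htarget, Measure.volume_eq_prod,
    setIntegral_prod_mul (L := ℝ) (fun r => r * rexp (-r ^ 2 / 2))
      (fun θ => (2 * π)⁻¹ * ((cos θ + σ * sin θ).sign - (cos θ).sign) ^ 2) (Ioi 0) (Ioo (-π) π)]
  rw [integral_const_mul, radial, angular σ hσ]
  field_simp
  ring

lemma variance_congr' {Ω : Type*} [MeasurableSpace Ω] {μ : Measure Ω} {f g : Ω → ℝ}
    (h : f =ᵐ[μ] g) : variance f μ = variance g μ := by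
  have hi : μ[f] = μ[g] := integral_congr_ae h
  rw [ProbabilityTheory.variance, ProbabilityTheory.variance,
    ProbabilityTheory.evariance, ProbabilityTheory.evariance]
  congr 1
  apply lintegral_congr_ae
  filter_upwards [h] with ω hω
  rw [hω, hi]

lemma iIndepFun_congr {Ω ι : Type*} [MeasurableSpace Ω] {μ : Measure Ω}
    {f g : ι → Ω → ℝ} (hf : iIndepFun f μ)
    (h : ∀ i, f i =ᵐ[μ] g i) : iIndepFun g μ := by
  rw [iIndepFun_iff_measure_inter_preimage_eq_mul] at hf ⊢
  intro S sets hsets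
  have hS : ∀ᵐ ω ∂μ, ∀ i ∈ S, f i ω = g i ω :=
    (ae_ball_iff S.countable_toSet).2 fun i _ => h i
  have h1 : ((⋂ i ∈ S, g i ⁻¹' sets i) : Set Ω) =ᵐ[μ] (⋂ i ∈ S, f i ⁻¹' sets i) := by
    rw [Filter.eventuallyEq_set]
    filter_upwards [hS] with ω hω
    simp only [Set.mem_iInter, Set.mem_preimage]
    constructor
    · intro hk i hi; rw [hω i hi]; exact hk i hi
    · intro hk i hi; rw [← hω i hi]; exact hk i hi
  rw [measure_congr h1, hf S hsets]
  refine Finset.prod_congr rfl fun i hi => ?_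
  refine measure_congr ?_
  rw [Filter.eventuallyEq_set]
  filter_upwards [h i] with ω hω
  simp only [Set.mem_preimage]
  rw [hω]


lemma sign_integral_gauss (v : ℝ≥0) : (∫ t, Real.sign t ∂(gaussianReal 0 v)) = 0 := by
  have hmap : (gaussianReal 0 v).map (fun t : ℝ => -1 * t) = gaussianReal 0 v := by
    rw [show (fun t : ℝ => -1 * t) = ((-1 : ℝ) * ·) from rfl, gaussianReal_map_const_mul (-1 : ℝ)]
    norm_num
  have hI : (∫ t, Real.sign t ∂(gaussianReal 0 v))
      = ∫ t, Real.sign (-1 * t) ∂(gaussianReal 0 v) := by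
    conv_lhs => rw [← hmap]
    rw [integral_map (measurable_const_mul (-1 : ℝ)).aemeasurable
      measurable_realSign.aestronglyMeasurable]
  have : (∫ t, Real.sign (-1 * t) ∂(gaussianReal 0 v))
      = - ∫ t, Real.sign t ∂(gaussianReal 0 v) := by
    rw [← integral_neg]
    congr 1; funext t
    rw [show (-1 : ℝ) * t = -t by ring, Real.sign_neg]
  rw [this] at hI
  linarith


lemma sign_sub_abs_le (a b : ℝ) : |Real.sign a - Real.sign b| ≤ 2 := by
  rcases Real.sign_apply_eq a with h|h|h <;> rcases Real.sign_apply_eq b with h'|h'|h' <;>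
    rw [h, h'] <;> norm_num

/-- If `w₁,…,w_n` are i.i.d. `N(0,σ_w²)`, `x₁,…,x_n` are i.i.d. `N(0,1)` and `Δ₁,…,Δ_n`
are i.i.d. `N(0,σ²)`, the three families mutually independent, and
`γ_i = sign(x_i + Δ_i) − sign x_i`, then `Var(∑ i, sign(w_i)·γ_i) = n·(4/π)·arctan σ`.
This is the output-change variance of one neuron of a one-layer fully binarized network
(both weights and activations binarized). -/
theorem variance_fully_binarized_output_change
    {Ω : Type*} [MeasurableSpace Ω] (μ : Measure Ω) [IsProbabilityMeasure μ]
    (n : ℕ) (hn : 1 ≤ n) (σw σ : ℝ) (hσw : 0 < σw) (hσ : 0 < σ)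
    (w x Δ : Fin n → Ω → ℝ)
    (hw : ∀ i, Measure.map (w i) μ = gaussianReal 0 ⟨σw ^ 2, sq_nonneg σw⟩)
    (hx : ∀ i, Measure.map (x i) μ = gaussianReal 0 1)
    (hΔ : ∀ i, Measure.map (Δ i) μ = gaussianReal 0 ⟨σ ^ 2, sq_nonneg σ⟩)
    (hindep : iIndepFun (Sum.elim w (Sum.elim x Δ)) μ) :
    variance
        (fun ω =>
          ∑ i, Real.sign (w i ω) * (Real.sign (x i ω + Δ i ω) - Real.sign (x i ω))) μ
      = n * ((4 / Real.pi) * Real.arctan σ) := by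
  classical
  -- measurable modifications
  have hwae : ∀ i, AEMeasurable (w i) μ := fun i => by
    by_contra hcon
    exact @IsProbabilityMeasure.ne_zero _ _ (gaussianReal 0 ⟨σw ^ 2, sq_nonneg σw⟩) (instIsProbabilityMeasureGaussianReal _ _)
      ((hw i).symm.trans (Measure.map_of_not_aemeasurable hcon))
  have hxae : ∀ i, AEMeasurable (x i) μ := fun i => by
    by_contra hcon
    exact IsProbabilityMeasure.ne_zero (gaussianReal 0 1)
      ((hx i).symm.trans (Measure.map_of_not_aemeasurable hcon))
  have hΔae : ∀ i, AEMeasurable (Δ i) μ := fun i => by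
    by_contra hcon
    exact @IsProbabilityMeasure.ne_zero _ _ (gaussianReal 0 ⟨σ ^ 2, sq_nonneg σ⟩) (instIsProbabilityMeasureGaussianReal _ _)
      ((hΔ i).symm.trans (Measure.map_of_not_aemeasurable hcon))
  set w' : Fin n → Ω → ℝ := fun i => (hwae i).mk (w i) with hw'def
  set x' : Fin n → Ω → ℝ := fun i => (hxae i).mk (x i) with hx'def
  set Δ' : Fin n → Ω → ℝ := fun i => (hΔae i).mk (Δ i) with hΔ'def
  have hw'm : ∀ i, Measurable (w' i) := fun i => (hwae i).measurable_mk
  have hx'm : ∀ i, Measurable (x' i) := fun i => (hxae i).measurable_mk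
  have hΔ'm : ∀ i, Measurable (Δ' i) := fun i => (hΔae i).measurable_mk
  have hw'map : ∀ i, Measure.map (w' i) μ = gaussianReal 0 ⟨σw ^ 2, sq_nonneg σw⟩ :=
    fun i => ((Measure.map_congr (hwae i).ae_eq_mk).symm).trans (hw i)
  have hx'map : ∀ i, Measure.map (x' i) μ = gaussianReal 0 1 :=
    fun i => ((Measure.map_congr (hxae i).ae_eq_mk).symm).trans (hx i)
  have hΔ'map : ∀ i, Measure.map (Δ' i) μ = gaussianReal 0 ⟨σ ^ 2, sq_nonneg σ⟩ :=
    fun i => ((Measure.map_congr (hΔae i).ae_eq_mk).symm).trans (hΔ i)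
  set W : (Fin n ⊕ (Fin n ⊕ Fin n)) → Ω → ℝ := Sum.elim w' (Sum.elim x' Δ') with hWdef
  have hWm : ∀ k, Measurable (W k) := by
    rintro (i | i | i)
    · exact hw'm i
    · exact hx'm i
    · exact hΔ'm i
  have hindep' : iIndepFun W μ := by
    apply iIndepFun_congr hindep
    rintro (i | i | i)
    · exact (hwae i).ae_eq_mk
    · exact (hxae i).ae_eq_mk
    · exact (hΔae i).ae_eq_mk
  set f : Fin n → Ω → ℝ := fun i ω =>
    Real.sign (w' i ω) * (Real.sign (x' i ω + Δ' i ω) - Real.sign (x' i ω)) with hfdef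
  have hfm : ∀ i, Measurable (f i) := fun i =>
    (measurable_realSign.comp (hw'm i)).mul
      ((measurable_realSign.comp ((hx'm i).add (hΔ'm i))).sub (measurable_realSign.comp (hx'm i)))
  have hfb : ∀ i ω, ‖f i ω‖ ≤ 2 := by
    intro i ω
    rw [Real.norm_eq_abs, hfdef]
    calc |Real.sign (w' i ω) * (Real.sign (x' i ω + Δ' i ω) - Real.sign (x' i ω))|
        = |Real.sign (w' i ω)| * |Real.sign (x' i ω + Δ' i ω) - Real.sign (x' i ω)| :=
          abs_mul _ _
      _ ≤ 1 * 2 := mul_le_mul (sign_abs_le _) (sign_sub_abs_le _ _) (abs_nonneg _) zero_le_one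
      _ = 2 := one_mul 2
  have hfℒ2 : ∀ i, MemLp (f i) 2 μ := fun i =>
    MemLp.of_bound (hfm i).aestronglyMeasurable 2 (Filter.Eventually.of_forall (hfb i))
  -- pairwise independence of the summands
  have hpair : Set.Pairwise ↑(Finset.univ : Finset (Fin n))
      (fun i j => IndepFun (f i) (f j) μ) := by
    intro i _ j _ hij
    classical
    have hdisj : Disjoint
        ({Sum.inl i, Sum.inr (Sum.inl i), Sum.inr (Sum.inr i)} :
          Finset (Fin n ⊕ (Fin n ⊕ Fin n)))
        ({Sum.inl j, Sum.inr (Sum.inl j), Sum.inr (Sum.inr j)} :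
          Finset (Fin n ⊕ (Fin n ⊕ Fin n))) := by
      simp only [Finset.disjoint_left, Finset.mem_insert, Finset.mem_singleton]
      rintro a (rfl | rfl | rfl) <;> simp [hij, hij.symm]
    have hbase := hindep'.indepFun_finset _ _ hdisj hWm
    have hmem1i : Sum.inl i ∈ ({Sum.inl i, Sum.inr (Sum.inl i), Sum.inr (Sum.inr i)} :
        Finset (Fin n ⊕ (Fin n ⊕ Fin n))) := by simp
    have hmem2i : Sum.inr (Sum.inl i) ∈
        ({Sum.inl i, Sum.inr (Sum.inl i), Sum.inr (Sum.inr i)} :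
        Finset (Fin n ⊕ (Fin n ⊕ Fin n))) := by simp
    have hmem3i : Sum.inr (Sum.inr i) ∈
        ({Sum.inl i, Sum.inr (Sum.inl i), Sum.inr (Sum.inr i)} :
        Finset (Fin n ⊕ (Fin n ⊕ Fin n))) := by simp
    have hmem1j : Sum.inl j ∈ ({Sum.inl j, Sum.inr (Sum.inl j), Sum.inr (Sum.inr j)} :
        Finset (Fin n ⊕ (Fin n ⊕ Fin n))) := by simp
    have hmem2j : Sum.inr (Sum.inl j) ∈
        ({Sum.inl j, Sum.inr (Sum.inl j), Sum.inr (Sum.inr j)} :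
        Finset (Fin n ⊕ (Fin n ⊕ Fin n))) := by simp
    have hmem3j : Sum.inr (Sum.inr j) ∈
        ({Sum.inl j, Sum.inr (Sum.inl j), Sum.inr (Sum.inr j)} :
        Finset (Fin n ⊕ (Fin n ⊕ Fin n))) := by simp
    have hGmi : Measurable (fun v : ((k : ({Sum.inl i, Sum.inr (Sum.inl i), Sum.inr (Sum.inr i)} :
        Finset (Fin n ⊕ (Fin n ⊕ Fin n)))) → ℝ) =>
        Real.sign (v ⟨_, hmem1i⟩) *
          (Real.sign (v ⟨_, hmem2i⟩ + v ⟨_, hmem3i⟩) - Real.sign (v ⟨_, hmem2i⟩))) :=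
      (measurable_realSign.comp (measurable_pi_apply (Subtype.mk _ hmem1i))).mul
        ((measurable_realSign.comp ((measurable_pi_apply (Subtype.mk _ hmem2i)).add
          (measurable_pi_apply (Subtype.mk _ hmem3i)))).sub
          (measurable_realSign.comp (measurable_pi_apply (Subtype.mk _ hmem2i))))
    have hGmj : Measurable (fun v : ((k : ({Sum.inl j, Sum.inr (Sum.inl j), Sum.inr (Sum.inr j)} :
        Finset (Fin n ⊕ (Fin n ⊕ Fin n)))) → ℝ) =>
        Real.sign (v ⟨_, hmem1j⟩) *
          (Real.sign (v ⟨_, hmem2j⟩ + v ⟨_, hmem3j⟩) - Real.sign (v ⟨_, hmem2j⟩))) :=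
      (measurable_realSign.comp (measurable_pi_apply (Subtype.mk _ hmem1j))).mul
        ((measurable_realSign.comp ((measurable_pi_apply (Subtype.mk _ hmem2j)).add
          (measurable_pi_apply (Subtype.mk _ hmem3j)))).sub
          (measurable_realSign.comp (measurable_pi_apply (Subtype.mk _ hmem2j))))
    exact hbase.comp hGmi hGmj
  -- variance of each summand
  have hvar : ∀ i : Fin n, variance (f i) μ = 4 / π * Real.arctan σ := by
    intro i
    have hint1 : Integrable (fun ω => Real.sign (w' i ω)) μ :=
      ((MemLp.of_bound (measurable_realSign.comp (hw'm i)).aestronglyMeasurable 1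
        (Filter.Eventually.of_forall fun ω => by
          rw [Real.norm_eq_abs]; exact sign_abs_le _) : MemLp _ 1 μ)).integrable le_rfl
    have hint2 : Integrable
        (fun ω => Real.sign (x' i ω + Δ' i ω) - Real.sign (x' i ω)) μ :=
      ((MemLp.of_bound ((measurable_realSign.comp ((hx'm i).add (hΔ'm i))).sub
          (measurable_realSign.comp (hx'm i))).aestronglyMeasurable 2
        (Filter.Eventually.of_forall fun ω => by
          rw [Real.norm_eq_abs]; exact sign_sub_abs_le _ _) : MemLp _ 1 μ)).integrable le_rfl
    have hprodmk : IndepFun (fun ω => (x' i ω, Δ' i ω)) (w' i) μ :=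
      hindep'.indepFun_prodMk hWm (Sum.inr (Sum.inl i)) (Sum.inr (Sum.inr i)) (Sum.inl i)
        (by simp) (by simp)
    have hIF : IndepFun (fun ω => Real.sign (w' i ω))
        (fun ω => Real.sign (x' i ω + Δ' i ω) - Real.sign (x' i ω)) μ := by
      have hGm : Measurable (fun p : ℝ × ℝ => Real.sign (p.1 + p.2) - Real.sign p.1) :=
        (measurable_realSign.comp (measurable_fst.add measurable_snd)).sub
          (measurable_realSign.comp measurable_fst)
      exact hprodmk.symm.comp measurable_realSign hGm
    have hmean : μ[f i] = 0 := by
      have hfi : f i = (fun ω => Real.sign (w' i ω)) *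
          (fun ω => Real.sign (x' i ω + Δ' i ω) - Real.sign (x' i ω)) := rfl
      rw [hfi, hIF.integral_mul_eq_mul_integral hint1.aestronglyMeasurable hint2.aestronglyMeasurable]
      have h1 : (∫ ω, Real.sign (w' i ω) ∂μ) = 0 := by
        rw [← integral_map (hw'm i).aemeasurable measurable_realSign.aestronglyMeasurable,
          hw'map i]
        exact sign_integral_gauss _
      rw [h1, zero_mul]
    -- second moment
    have hvne : (⟨σw ^ 2, sq_nonneg σw⟩ : ℝ≥0) ≠ 0 := by
      intro hcon
      have h0 : σw ^ 2 = 0 := congrArg NNReal.toReal hcon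
      exact pow_ne_zero 2 hσw.ne' h0
    have hmap0 : μ (w' i ⁻¹' {0}) = 0 := by
      rw [← Measure.map_apply (hw'm i) (measurableSet_singleton 0), hw'map i,
        gaussianReal_of_var_ne_zero _ hvne, withDensity_apply _ (measurableSet_singleton 0)]
      rw [setLIntegral_measure_zero _ _ (by simp : (volume : Measure ℝ) {0} = 0)]
    have hw0 : ∀ᵐ ω ∂μ, w' i ω ≠ 0 := by
      rw [ae_iff]
      convert hmap0 using 2
      ext ω; simp
    have hsq : (fun ω => (f i ω)^2)
        =ᵐ[μ] fun ω => (Real.sign (x' i ω + Δ' i ω) - Real.sign (x' i ω))^2 := by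
      filter_upwards [hw0] with ω hω
      rcases Real.sign_apply_eq_of_ne_zero _ hω with h | h <;>
      · show (Real.sign (w' i ω) * _)^2 = _
        rw [mul_pow, h]; ring
    have hpairm : Measurable (fun ω => (x' i ω, Δ' i ω)) := (hx'm i).prodMk (hΔ'm i)
    have hG2m : Measurable (fun p : ℝ × ℝ => (Real.sign (p.1 + p.2) - Real.sign p.1)^2) :=
      ((measurable_realSign.comp (measurable_fst.add measurable_snd)).sub
        (measurable_realSign.comp measurable_fst)).pow_const 2
    have hmap2 : Measure.map (fun ω => (x' i ω, Δ' i ω)) μ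
        = (gaussianReal 0 1).prod (gaussianReal 0 ⟨σ ^ 2, sq_nonneg σ⟩) := by
      have hIFxd : IndepFun (x' i) (Δ' i) μ :=
        hindep'.indepFun (show (Sum.inr (Sum.inl i) : Fin n ⊕ (Fin n ⊕ Fin n))
          ≠ Sum.inr (Sum.inr i) by simp)
      rw [(indepFun_iff_map_prod_eq_prod_map_map (hx'm i).aemeasurable
        (hΔ'm i).aemeasurable).1 hIFxd, hx'map i, hΔ'map i]
    have hsecond : μ[f i ^ 2] = 4 / π * Real.arctan σ := by
      have e1 : μ[f i ^ 2]
          = ∫ ω, (Real.sign (x' i ω + Δ' i ω) - Real.sign (x' i ω))^2 ∂μ :=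
        integral_congr_ae hsq
      rw [e1]
      have e2 : (∫ ω, (Real.sign (x' i ω + Δ' i ω) - Real.sign (x' i ω))^2 ∂μ)
          = ∫ p : ℝ × ℝ, (Real.sign (p.1 + p.2) - Real.sign p.1)^2
              ∂((gaussianReal 0 1).prod (gaussianReal 0 ⟨σ ^ 2, sq_nonneg σ⟩)) := by
        rw [← hmap2, integral_map hpairm.aemeasurable hG2m.aestronglyMeasurable]
      rw [e2]
      have hmapσ : gaussianReal 0 ⟨σ ^ 2, sq_nonneg σ⟩ = (gaussianReal 0 1).map (σ * ·) := by
        rw [gaussianReal_map_const_mul σ]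
        norm_num
        rfl
      rw [hmapσ]
      have hprodmap : (gaussianReal 0 1).prod ((gaussianReal 0 1).map (σ * ·))
          = ((gaussianReal 0 1).prod (gaussianReal 0 1)).map (Prod.map id (σ * ·)) := by
        rw [← Measure.map_prod_map _ _ measurable_id (measurable_const_mul σ), Measure.map_id]
      rw [hprodmap, integral_map (measurable_id.prodMap (measurable_const_mul σ)).aemeasurable
        hG2m.aestronglyMeasurable]
      exact core σ hσ
    rw [variance_eq_sub (hfℒ2 i), hmean, hsecond]
    norm_num
  -- assemble
  have hall1 : ∀ᵐ ω ∂μ, ∀ i, w i ω = w' i ω := ae_all_iff.2 fun i => (hwae i).ae_eq_mk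
  have hall2 : ∀ᵐ ω ∂μ, ∀ i, x i ω = x' i ω := ae_all_iff.2 fun i => (hxae i).ae_eq_mk
  have hall3 : ∀ᵐ ω ∂μ, ∀ i, Δ i ω = Δ' i ω := ae_all_iff.2 fun i => (hΔae i).ae_eq_mk
  have hae_sum : (fun ω =>
      ∑ i, Real.sign (w i ω) * (Real.sign (x i ω + Δ i ω) - Real.sign (x i ω)))
        =ᵐ[μ] (∑ i, f i) := by
    filter_upwards [hall1, hall2, hall3] with ω h1 h2 h3
    rw [Finset.sum_apply]
    refine Finset.sum_congr rfl fun i _ => ?_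
    rw [h1 i, h2 i, h3 i]
  rw [variance_congr' hae_sum, IndepFun.variance_sum (fun i _ => hfℒ2 i) hpair]
  rw [Finset.sum_congr rfl fun i _ => hvar i, Finset.sum_const, Finset.card_univ,
    Fintype.card_fin, nsmul_eq_mul]
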